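/- arXiv:1709.06142 — 5 statements merged into one kernel-verified Lean document; each statement's English description precedes it below -/
import Mathlib

section
/- Let K ≥ 2 and N ≥ 1 be coprime integers and let b = (b_1,…,b_K) be an ordered K-partition of N. Set μ = (K/(K+N))·‖Bb‖² and c_eff = K − 1 − (12K/(K+N))·‖P_{𝟙⊥}ψ(b) − (N/K)ρ‖², where ‖·‖ is the Euclidean norm on ℝ^K. Then μ = (1/12)(K − 1 − c_eff). -/
open scoped BigOperators

/-- The K×K matrix B with B_{ij} = (1/(2K))(−(K−1) + 2·((j−i) mod K)). -/
noncomputable def Bmat (K : ℕ) : Matrix (Fin K) (Fin K) ℝ :=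
  Matrix.of fun i j => (1 / (2 * (K : ℝ))) * (-((K : ℝ) - 1) + 2 * (((j - i : Fin K) : ℕ) : ℝ))

/-- The all-ones K×K matrix. -/
noncomputable def Jmat (K : ℕ) : Matrix (Fin K) (Fin K) ℝ := Matrix.of fun _ _ => 1

/-- Orthogonal projection onto the hyperplane orthogonal to (1,…,1). -/
noncomputable def Pperp (K : ℕ) : Matrix (Fin K) (Fin K) ℝ := 1 - ((K : ℝ))⁻¹ • Jmat K

/-- ψ(b) with i-th entry N − (b_1 + ⋯ + b_i)  (0-indexed). -/
noncomputable def psiVec (K N : ℕ) (b : Fin K → ℕ) : Fin K → ℝ :=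
  fun i => (N : ℝ) - ∑ j ∈ Finset.Iic i, (b j : ℝ)

/-- ρ = (1/2)(K−1, K−3, …, 1−K). -/
noncomputable def rhoVec (K : ℕ) : Fin K → ℝ := fun i => ((K : ℝ) - 1 - 2 * (i : ℕ)) / 2

lemma sub_val' (K : ℕ) (i j : Fin K) :
    ((j - i : Fin K) : ℕ) = if i.val ≤ j.val then j.val - i.val else K + j.val - i.val := by
  have hj := j.isLt
  have hi := i.isLt
  rw [Fin.sub_def]
  rcases le_or_gt i.val j.val with h | h
  · simp only [if_pos h]
    rw [show K - i.val + j.val = (j.val - i.val) + K by omega, Nat.add_mod_right,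
      Nat.mod_eq_of_lt (by omega)]
  · simp only [if_neg (not_le.mpr h)]
    rw [Nat.mod_eq_of_lt (by omega)]
    omega


lemma val_sum_pair (K : ℕ) (i j : Fin K) :
    ((j - i : Fin K) : ℕ) + ((i - j : Fin K) : ℕ) = if i = j then 0 else K := by
  have hj := j.isLt
  have hi := i.isLt
  rw [sub_val' K i j, sub_val' K j i]
  rcases eq_or_ne i j with h | h
  · simp [h]
  · have hv : i.val ≠ j.val := fun hv => h (Fin.ext hv)
    rw [if_neg h]
    split_ifs <;> omega


lemma gauss (K : ℕ) (hK : 2 ≤ K) (j : Fin K) :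
    ∑ i : Fin K, ((((j - i : Fin K) : ℕ)) : ℝ) * 2 = (K : ℝ) * ((K : ℝ) - 1) := by
  haveI : NeZero K := ⟨by omega⟩
  have h1 : ∑ i : Fin K, ((((j - i : Fin K) : ℕ)) : ℝ) * 2 = ∑ k : Fin K, ((k : ℕ) : ℝ) * 2 :=
    Fintype.sum_equiv (Equiv.subLeft j) _ _ (fun i => rfl)
  have h2 : ((∑ i ∈ Finset.range K, i) * 2 : ℕ) = K * (K - 1) := Finset.sum_range_id_mul_two K
  rw [h1, ← Finset.sum_mul, Fin.sum_univ_eq_sum_range]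
  have h3 : ((∑ i ∈ Finset.range K, i : ℕ) : ℝ) = ∑ i ∈ Finset.range K, (i : ℝ) := by push_cast; rfl
  have h4 : ((K * (K - 1) : ℕ) : ℝ) = (K : ℝ) * ((K : ℝ) - 1) := by
    push_cast [Nat.cast_sub (by omega : 1 ≤ K)]; ring
  rw [← h3, ← h4, ← Nat.cast_ofNat, ← Nat.cast_mul, h2]


lemma col_sum (K : ℕ) (hK : 2 ≤ K) (j : Fin K) : ∑ i, Bmat K i j = 0 := by
  have hK0 : (K : ℝ) ≠ 0 := by positivity
  simp only [Bmat, Matrix.of_apply]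
  rw [← Finset.mul_sum, Finset.sum_add_distrib, Finset.sum_const, Finset.card_univ,
    Fintype.card_fin, ← Finset.mul_sum]
  have := gauss K hK j
  rw [← Finset.sum_mul] at this
  rw [show ∑ i : Fin K, ((((j - i : Fin K) : ℕ)) : ℝ) = (K : ℝ) * ((K : ℝ) - 1) / 2 by
    rw [← this]; ring]
  field_simp
  ring


lemma Bsym (K : ℕ) (hK : 2 ≤ K) (i j : Fin K) :
    Bmat K i j + Bmat K j i = if i = j then (1 : ℝ)/K - 1 else 1/K := by
  have hK0 : (K : ℝ) ≠ 0 := by positivity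
  simp only [Bmat, Matrix.of_apply]
  have h := val_sum_pair K i j
  rcases eq_or_ne i j with h' | h'
  · rw [if_pos h'] at h ⊢
    have h1 : (((j - i : Fin K) : ℕ) : ℝ) = 0 := by norm_cast; omega
    have h2 : (((i - j : Fin K) : ℕ) : ℝ) = 0 := by norm_cast; omega
    rw [h1, h2]; field_simp; ring
  · rw [if_neg h'] at h ⊢
    have h1 : (((j - i : Fin K) : ℕ) : ℝ) + (((i - j : Fin K) : ℕ) : ℝ) = (K : ℝ) := by
      norm_cast
    rw [show (((i - j : Fin K) : ℕ) : ℝ) = (K:ℝ) - (((j - i : Fin K) : ℕ) : ℝ) by linarith]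
    field_simp
    ring


lemma iic_sum (K : ℕ) (f : Fin K → ℝ) (i : Fin K) :
    ∑ l ∈ Finset.Iic i, f l = ∑ l : Fin K, if l ≤ i then f l else 0 := by
  rw [← Finset.sum_filter]
  congr 1
  ext x
  simp [Finset.mem_Iic]


lemma swap_sum (K : ℕ) (hK : 2 ≤ K) (f : Fin K → ℝ) :
    ∑ j : Fin K, ∑ l ∈ Finset.Iic j, f l = ∑ l : Fin K, ((K : ℝ) - (l : ℕ)) * f l := by
  haveI : NeZero K := ⟨by omega⟩
  have h1 : ∀ j, ∑ l ∈ Finset.Iic j, f l = ∑ l : Fin K, if l ≤ j then f l else 0 :=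
    fun j => iic_sum K f j
  simp only [h1]
  rw [Finset.sum_comm]
  refine Finset.sum_congr rfl fun l _ => ?_
  have h2 : ∀ j : Fin K, (l ≤ j) ↔ (j ∈ Finset.Ici l) := by simp [Finset.mem_Ici]
  rw [Finset.sum_congr rfl fun j _ => by rw [if_congr (h2 j) rfl rfl]]
  rw [Finset.sum_ite_mem, Finset.univ_inter, Finset.sum_const, Fin.card_Ici,
    nsmul_eq_mul, Nat.cast_sub (le_of_lt l.isLt)]


lemma Brow_entry (K : ℕ) (hK : 2 ≤ K) (i l : Fin K) (x : ℝ) :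
    Bmat K i l * x
      = (if l ≤ i then x else 0) - (((K : ℝ) - (l : ℕ))/K) * x
        + ((((K : ℝ) - 1 - 2*(i : ℕ))/2 + 1)/K) * x - (if l = i then x else 0) := by
  have hK0 : (K : ℝ) ≠ 0 := by positivity
  have hil := i.isLt
  have hll := l.isLt
  simp only [Bmat, Matrix.of_apply, Fin.le_def]
  rw [sub_val' K i l]
  rcases lt_trichotomy (l : ℕ) (i : ℕ) with h | h | h
  · rw [if_neg (by omega : ¬ (i:ℕ) ≤ (l:ℕ)), if_pos (by omega : (l:ℕ) ≤ (i:ℕ)),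
      if_neg (show ¬ l = i from fun he => by subst he; omega)]
    rw [Nat.cast_sub (by omega : (i:ℕ) ≤ K + (l:ℕ))]
    push_cast
    field_simp
    ring
  · have he : l = i := Fin.ext h
    subst he
    rw [if_pos (le_refl (l:ℕ)), if_pos (le_refl (l:ℕ)), if_pos rfl]
    rw [show (l:ℕ) - (l:ℕ) = 0 by omega]
    push_cast
    field_simp
    ring
  · rw [if_pos (by omega : (i:ℕ) ≤ (l:ℕ)), if_neg (by omega : ¬ (l:ℕ) ≤ (i:ℕ)),
      if_neg (show ¬ l = i from fun he => by subst he; omega)]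
    rw [Nat.cast_sub (by omega : (i:ℕ) ≤ (l:ℕ))]
    push_cast
    field_simp
    ring


lemma pointwise (K N : ℕ) (hK : 2 ≤ K) (b : Fin K → ℕ) (hb : ∑ i, b i = N) (i : Fin K) :
    (Pperp K).mulVec (psiVec K N b) i - ((N : ℝ)/K) * rhoVec K i
      = -((Bmat K).mulVec (fun j => (b j : ℝ)) i + (b i : ℝ) - (N : ℝ)/K) := by
  have hK0 : (K : ℝ) ≠ 0 := by positivity
  have hN : (N : ℝ) = ∑ l, (b l : ℝ) := by rw [← hb]; push_cast; rfl
  have hP : (Pperp K).mulVec (psiVec K N b) i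
      = psiVec K N b i - (K : ℝ)⁻¹ * ∑ j, psiVec K N b j := by
    simp only [Pperp, Matrix.sub_mulVec, Matrix.one_mulVec, Matrix.smul_mulVec,
      Pi.sub_apply, Pi.smul_apply, smul_eq_mul]
    congr 1
    simp [Matrix.mulVec, dotProduct, Jmat]
  have hpsisum : ∑ j, psiVec K N b j
      = (K : ℝ) * N - ∑ l : Fin K, ((K : ℝ) - (l : ℕ)) * (b l : ℝ) := by
    simp only [psiVec]
    rw [Finset.sum_sub_distrib, Finset.sum_const, Finset.card_univ, Fintype.card_fin,
      swap_sum K hK, nsmul_eq_mul]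
  have hB : (Bmat K).mulVec (fun j => (b j : ℝ)) i = ∑ l, Bmat K i l * (b l : ℝ) := rfl
  have main : ∑ l, Bmat K i l * (b l : ℝ)
      = (∑ l : Fin K, if l ≤ i then (b l : ℝ) else 0)
        - (K : ℝ)⁻¹ * (∑ l : Fin K, ((K : ℝ) - (l : ℕ)) * (b l : ℝ))
        + ((((K : ℝ) - 1 - 2*(i : ℕ))/2 + 1)/K) * (N : ℝ)
        - (b i : ℝ) := by
    rw [Finset.sum_congr rfl fun l _ => Brow_entry K hK i l ((b l : ℝ))]
    rw [Finset.sum_sub_distrib, Finset.sum_add_distrib, Finset.sum_sub_distrib]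
    congr 1
    · congr 1
      · congr 1
        rw [Finset.mul_sum]
        refine Finset.sum_congr rfl fun l _ => by ring
      · rw [← Finset.mul_sum, ← hN]
    · rw [Finset.sum_ite_eq' Finset.univ i fun l => ((b l : ℝ))]
      simp
  rw [hP, hpsisum, hB, main]
  simp only [psiVec, rhoVec]
  rw [iic_sum K (fun l => ((b l : ℝ))) i]
  field_simp
  ring


lemma norm_eq (K N : ℕ) (hK : 2 ≤ K) (b : Fin K → ℕ) (hb : ∑ i, b i = N) :
    ∑ i, ((Pperp K).mulVec (psiVec K N b) i - ((N : ℝ)/K) * rhoVec K i) ^ 2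
      = ∑ i, ((Bmat K).mulVec (fun j => (b j : ℝ)) i) ^ 2 := by
  have hK0 : (K : ℝ) ≠ 0 := by positivity
  have hN : (N : ℝ) = ∑ l, (b l : ℝ) := by rw [← hb]; push_cast; rfl
  set x : Fin K → ℝ := fun i => (Bmat K).mulVec (fun j => (b j : ℝ)) i with hx
  have hxd : ∀ i, x i = ∑ j, Bmat K i j * (b j : ℝ) := fun i => rfl
  -- F1 : total sum of x is zero
  have F1 : ∑ i, x i = 0 := by
    simp_rw [hxd]
    rw [Finset.sum_comm]
    refine Finset.sum_eq_zero fun j _ => ?_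
    rw [← Finset.sum_mul, col_sum K hK j, zero_mul]
  -- F2 : cross term
  set T : ℝ := ∑ i, x i * (b i : ℝ) with hT
  have F2 : 2 * T = (N : ℝ)^2 / K - ∑ i, (b i : ℝ)^2 := by
    have hTd : T = ∑ i, ∑ j, Bmat K i j * ((b i : ℝ) * (b j : ℝ)) := by
      rw [hT]
      refine Finset.sum_congr rfl fun i _ => ?_
      rw [hxd, Finset.sum_mul]
      exact Finset.sum_congr rfl fun j _ => by ring
    have hswap : T = ∑ i, ∑ j, Bmat K j i * ((b i : ℝ) * (b j : ℝ)) := by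
      rw [hTd, Finset.sum_comm]
      exact Finset.sum_congr rfl fun i _ => Finset.sum_congr rfl fun j _ => by ring
    have h2T : 2 * T = ∑ i, ∑ j, (Bmat K i j + Bmat K j i) * ((b i : ℝ) * (b j : ℝ)) := by
      rw [two_mul]
      nth_rewrite 1 [hTd]
      nth_rewrite 1 [hswap]
      rw [← Finset.sum_add_distrib]
      refine Finset.sum_congr rfl fun i _ => ?_
      rw [← Finset.sum_add_distrib]
      exact Finset.sum_congr rfl fun j _ => by ring
    rw [h2T]
    have hentry : ∀ i j : Fin K, (Bmat K i j + Bmat K j i) * ((b i : ℝ) * (b j : ℝ))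
        = (1/(K:ℝ)) * ((b i : ℝ) * (b j : ℝ)) - (if j = i then (b i : ℝ) * (b j : ℝ) else 0) := by
      intro i j
      rw [Bsym K hK i j]
      rcases eq_or_ne i j with h | h
      · rw [if_pos h, if_pos h.symm]; ring
      · rw [if_neg h, if_neg (Ne.symm h)]; ring
    calc ∑ i, ∑ j, (Bmat K i j + Bmat K j i) * ((b i : ℝ) * (b j : ℝ))
        = ∑ i, ∑ j, ((1/(K:ℝ)) * ((b i : ℝ) * (b j : ℝ))
            - (if j = i then (b i : ℝ) * (b j : ℝ) else 0)) :=
          Finset.sum_congr rfl fun i _ => Finset.sum_congr rfl fun j _ => hentry i j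
      _ = ∑ i, ((1/(K:ℝ)) * ((b i : ℝ) * ∑ j, (b j : ℝ)) - (b i : ℝ) * (b i : ℝ)) := by
          refine Finset.sum_congr rfl fun i _ => ?_
          rw [Finset.sum_sub_distrib]
          congr 1
          · rw [← Finset.mul_sum, ← Finset.mul_sum]
          · exact Finset.sum_ite_eq' Finset.univ i (fun j => (b i : ℝ) * (b j : ℝ)) |>.trans
              (by simp)
      _ = (N : ℝ)^2 / K - ∑ i, (b i : ℝ)^2 := by
          rw [Finset.sum_sub_distrib]
          congr 1
          · rw [← Finset.mul_sum, ← Finset.sum_mul, ← hN]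
            ring
          · exact Finset.sum_congr rfl fun i _ => by ring
  -- F3 : sum of v squared
  have F3 : ∑ i, ((b i : ℝ) - (N : ℝ)/K)^2 = (∑ i, (b i : ℝ)^2) - (N : ℝ)^2/K := by
    have h1 : ∀ i : Fin K, ((b i : ℝ) - (N : ℝ)/K)^2
        = (b i : ℝ)^2 - (2*(N : ℝ)/K)*(b i : ℝ) + (N : ℝ)^2/(K : ℝ)^2 := fun i => by ring
    rw [Finset.sum_congr rfl fun i _ => h1 i, Finset.sum_add_distrib, Finset.sum_sub_distrib,
      ← Finset.mul_sum, ← hN, Finset.sum_const, Finset.card_univ, Fintype.card_fin,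
      nsmul_eq_mul]
    field_simp
    ring
  -- assemble
  have hpt : ∀ i, ((Pperp K).mulVec (psiVec K N b) i - ((N : ℝ)/K) * rhoVec K i) ^ 2
      = (x i + ((b i : ℝ) - (N : ℝ)/K))^2 := by
    intro i
    rw [pointwise K N hK b hb i]
    ring
  rw [Finset.sum_congr rfl fun i _ => hpt i]
  have hexp : ∀ i, (x i + ((b i : ℝ) - (N : ℝ)/K))^2
      = x i ^ 2 + 2 * (x i * (b i : ℝ)) - (2*(N : ℝ)/K) * x i + ((b i : ℝ) - (N : ℝ)/K)^2 :=
    fun i => by ring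
  rw [Finset.sum_congr rfl fun i _ => hexp i, Finset.sum_add_distrib, Finset.sum_sub_distrib,
    Finset.sum_add_distrib, ← Finset.mul_sum, ← Finset.mul_sum, ← hT, F1, F3]
  rw [show (2:ℝ) * T = (N : ℝ)^2 / K - ∑ i, (b i : ℝ)^2 from F2]
  ring

theorem mu_eq_ceff_relation (K N : ℕ) (hK : 2 ≤ K) (hN : 1 ≤ N)
    (hcop : Nat.Coprime K N) (b : Fin K → ℕ) (hb : ∑ i, b i = N)
    (μ ceff : ℝ)
    (hμ : μ = ((K : ℝ) / (K + N)) *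
      ∑ i, ((Bmat K).mulVec (fun j => (b j : ℝ)) i) ^ 2)
    (hceff : ceff = (K : ℝ) - 1 - (12 * (K : ℝ) / (K + N)) *
      ∑ i, ((Pperp K).mulVec (psiVec K N b) i - ((N : ℝ) / K) * rhoVec K i) ^ 2) :
    μ = (1 / 12) * ((K : ℝ) - 1 - ceff) := by
  rw [hμ, hceff, norm_eq K N hK b hb]
  ring
end

section
/- Let K ≥ 2 and N ≥ 1 be coprime integers. Let P_2, …, P_K ∈ ℂ[z] be polynomials such that, for each i with 2 ≤ i ≤ K, either P_i = 0 or K·deg(P_i) < N(i−1) (equivalently deg P_i ≤ N(i−1)/K − 1). Then the polynomial λ^K − z^N + ∑_{i=2}^{K} P_i(z)·λ^{K−i}, regarded as a polynomial in the variable λ with coefficients in ℂ[z], is irreducible in ℂ[z][λ]. -/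
open scoped BigOperators
open Polynomial

namespace SPIaux

-- generic single-layer helpers
lemma hmono {S : Type*} [CommSemiring S] (a b : S) (m i : ℕ) :
    C a * (C b * X ^ m) ^ i = C (a * b ^ i) * X ^ (m * i) := by
  rw [mul_pow, ← C_pow, ← pow_mul, ← mul_assoc, ← C_mul]

lemma hpow {S : Type*} [CommSemiring S] (b : S) (m i : ℕ) :
    (C b * X ^ m) ^ i = C (b ^ i) * X ^ (m * i) := by
  rw [mul_pow, ← C_pow, ← pow_mul]

lemma hCC {S : Type*} [CommSemiring S] (a b : S) (n : ℕ) :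
    C a * C b ^ n = C (a * b ^ n) := by rw [← C_pow, ← C_mul]

noncomputable def fm (K : ℕ) : Polynomial ℂ →+* Polynomial (Polynomial (Polynomial ℂ)) :=
  eval₂RingHom ((Polynomial.C : Polynomial (Polynomial ℂ) →+* Polynomial (Polynomial (Polynomial ℂ))).comp
    ((Polynomial.C : Polynomial ℂ →+* Polynomial (Polynomial ℂ)).comp (Polynomial.C : ℂ →+* Polynomial ℂ)))
    (C (C X) * X ^ K : Polynomial (Polynomial (Polynomial ℂ)))

noncomputable def Ph (K N : ℕ) :
    Polynomial (Polynomial ℂ) →+* Polynomial (Polynomial (Polynomial ℂ)) :=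
  eval₂RingHom (fm K) (C X * X ^ N : Polynomial (Polynomial (Polynomial ℂ)))

lemma fm_monomial (K n : ℕ) (a : ℂ) :
    fm K (monomial n a) = C (C (C a) * C X ^ n) * X ^ (K * n) := by
  have h1 : fm K (monomial n a) = C (C (C a)) * (C (C X) * X ^ K) ^ n := by
    simp only [fm, coe_eval₂RingHom, eval₂_monomial, RingHom.coe_comp, Function.comp_apply]
  exact h1.trans (hmono _ _ _ _)

lemma fm_X (K : ℕ) : fm K X = C (C X) * X ^ K := by
  simp only [fm, coe_eval₂RingHom, eval₂_X]

lemma Ph_X (K N : ℕ) : Ph K N X = C X * X ^ N := by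
  simp only [Ph, coe_eval₂RingHom, eval₂_X]

lemma Ph_C (K N : ℕ) (p : Polynomial ℂ) : Ph K N (C p) = fm K p := by
  simp only [Ph, coe_eval₂RingHom, eval₂_C, coe_eval₂RingHom]

lemma fm_coeff_isC (K : ℕ) (p : Polynomial ℂ) (m : ℕ) :
    ∃ r : Polynomial ℂ, (fm K p).coeff m = C r := by
  induction p using Polynomial.induction_on' generalizing m with
  | add p q hp hq =>
      obtain ⟨r1, h1⟩ := hp m
      obtain ⟨r2, h2⟩ := hq m
      exact ⟨r1 + r2, by rw [map_add, coeff_add, h1, h2, C_add]⟩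
  | monomial n a =>
      rw [fm_monomial, coeff_C_mul_X_pow]
      by_cases h : m = K * n
      · exact ⟨C a * X ^ n, by rw [if_pos h, hCC]⟩
      · exact ⟨0, by rw [if_neg h, C_0]⟩

lemma fm_coeff_natDegree (K : ℕ) (p : Polynomial ℂ) (m : ℕ) :
    ((fm K p).coeff m).natDegree = 0 := by
  obtain ⟨r, hr⟩ := fm_coeff_isC K p m
  rw [hr, natDegree_C]

lemma fm_natDegree_le (K : ℕ) (p : Polynomial ℂ) :
    (fm K p).natDegree ≤ K * p.natDegree := by
  have hs : fm K p = ∑ i ∈ Finset.range (p.natDegree + 1), fm K (monomial i (p.coeff i)) := by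
    conv_lhs => rw [p.as_sum_range' (p.natDegree + 1) (lt_add_one _)]
    rw [map_sum]
  rw [hs]
  apply natDegree_sum_le_of_forall_le
  intro i hi
  rw [fm_monomial]
  exact (natDegree_C_mul_X_pow_le _ _).trans
    (Nat.mul_le_mul_left K (Nat.lt_succ_iff.mp (Finset.mem_range.mp hi)))

lemma Ph_coeff_natDegree_le (K N : ℕ) (q : Polynomial (Polynomial ℂ)) (j : ℕ) :
    ((Ph K N q).coeff j).natDegree ≤ q.natDegree := by
  have hs : Ph K N q = ∑ i ∈ Finset.range (q.natDegree + 1),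
      fm K (q.coeff i) * (C (X ^ i) * X ^ (N * i)) := by
    have h0 : Ph K N q = ∑ i ∈ Finset.range (q.natDegree + 1),
        fm K (q.coeff i) * (C X * X ^ N) ^ i := by
      simpa [Ph, coe_eval₂RingHom] using eval₂_eq_sum_range (fm K) (C X * X ^ N) (p := q)
    rw [h0]
    refine Finset.sum_congr rfl fun i _ => ?_
    rw [show ((C X * X ^ N : Polynomial (Polynomial (Polynomial ℂ))) ^ i)
      = C (X ^ i) * X ^ (N * i) from hpow X N i]
  rw [hs, finset_sum_coeff]
  apply natDegree_sum_le_of_forall_le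
  intro i hi
  have hi' : i ≤ q.natDegree := Nat.lt_succ_iff.mp (Finset.mem_range.mp hi)
  rw [← mul_assoc, mul_comm (fm K (q.coeff i)) (C (X ^ i)), mul_assoc,
    coeff_C_mul, coeff_mul_X_pow']
  by_cases h : N * i ≤ j
  · rw [if_pos h]
    refine natDegree_mul_le.trans ?_
    have h1 := fm_coeff_natDegree K (q.coeff i) (j - N * i)
    have h2 : (X ^ i : Polynomial (Polynomial ℂ)).natDegree = i := natDegree_X_pow i
    omega
  · rw [if_neg h, mul_zero, natDegree_zero]
    exact Nat.zero_le _

lemma hCpow {S : Type*} [CommSemiring S] (b : S) (n : ℕ) : (C b) ^ n = C (b ^ n) :=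
  C_pow.symm

lemma hsubm {S : Type*} [CommRing S] (a b : S) (m : ℕ) :
    C a * X ^ m - C b * X ^ m = C (a - b) * X ^ m := by rw [← sub_mul, ← C_sub]

lemma fm_X_pow (K N : ℕ) : fm K (X ^ N) = C (C (X ^ N)) * X ^ (N * K) := by
  rw [map_pow, fm_X, hpow, hCpow, Nat.mul_comm K N]

lemma Ph_F_eq (K N : ℕ) (P : ℕ → Polynomial ℂ) :
    Ph K N ((X : Polynomial (Polynomial ℂ)) ^ K - C (Polynomial.X ^ N)
        + ∑ i ∈ Finset.Icc 2 K, C (P i) * (X : Polynomial (Polynomial ℂ)) ^ (K - i))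
    = C ((X : Polynomial (Polynomial ℂ)) ^ K - C (Polynomial.X ^ N)) * X ^ (N * K)
      + ∑ i ∈ Finset.Icc 2 K, fm K (P i) * (C ((X : Polynomial (Polynomial ℂ)) ^ (K - i))
          * X ^ (N * (K - i))) := by
  rw [map_add, map_sub, map_pow, Ph_X, Ph_C, map_sum, hpow, fm_X_pow, hsubm]
  refine congrArg _ (Finset.sum_congr rfl fun i _ => ?_)
  rw [map_mul, Ph_C, map_pow, Ph_X, hpow]

lemma E_natDegree_le (K N : ℕ) (hK : 2 ≤ K) (hN : 1 ≤ N) (P : ℕ → Polynomial ℂ)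
    (hdeg : ∀ i, 2 ≤ i → i ≤ K → P i = 0 ∨ K * (P i).natDegree < N * (i - 1)) :
    (∑ i ∈ Finset.Icc 2 K, fm K (P i) * (C ((X : Polynomial (Polynomial ℂ)) ^ (K - i))
        * X ^ (N * (K - i)))).natDegree < N * K := by
  have hNK : 1 ≤ N * K := Nat.one_le_iff_ne_zero.mpr (by positivity)
  refine Nat.lt_of_le_of_lt (natDegree_sum_le_of_forall_le _ _ fun i hi => ?_)
    (Nat.sub_lt (by omega) one_pos)
  obtain ⟨h2i, hiK⟩ := Finset.mem_Icc.mp hi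
  rcases hdeg i h2i hiK with h0 | hlt
  · rw [h0, map_zero, zero_mul, natDegree_zero]
    exact Nat.zero_le _
  · refine natDegree_mul_le.trans ?_
    have h1 := fm_natDegree_le K (P i)
    have h2 : (C ((X : Polynomial (Polynomial ℂ)) ^ (K - i))
        * (X : Polynomial (Polynomial (Polynomial ℂ))) ^ (N * (K - i))).natDegree
        ≤ N * (K - i) := natDegree_C_mul_X_pow_le _ _
    -- K * deg P i + N * (K - i) ≤ N*(i-1) - 1 + N*(K-i) = N*(K-1) - 1 ≤ N*K - 1
    have h3 : N * (i - 1) + N * (K - i) = N * (K - 1) := by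
      rw [← Nat.mul_add]
      congr 1
      omega
    have h4 : N * (K - 1) ≤ N * K - N := by
      rw [Nat.mul_sub]
      omega
    omega

lemma Wne (K N : ℕ) (hK : 2 ≤ K) :
    ((X : Polynomial (Polynomial ℂ)) ^ K - C (Polynomial.X ^ N)) ≠ 0 :=
  X_pow_sub_C_ne_zero (by omega) _

lemma Ph_F_natDegree (K N : ℕ) (hK : 2 ≤ K) (hN : 1 ≤ N) (P : ℕ → Polynomial ℂ)
    (hdeg : ∀ i, 2 ≤ i → i ≤ K → P i = 0 ∨ K * (P i).natDegree < N * (i - 1)) :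
    (Ph K N ((X : Polynomial (Polynomial ℂ)) ^ K - C (Polynomial.X ^ N)
        + ∑ i ∈ Finset.Icc 2 K, C (P i) * (X : Polynomial (Polynomial ℂ)) ^ (K - i))).natDegree
      = N * K
    ∧ (Ph K N ((X : Polynomial (Polynomial ℂ)) ^ K - C (Polynomial.X ^ N)
        + ∑ i ∈ Finset.Icc 2 K, C (P i) * (X : Polynomial (Polynomial ℂ)) ^ (K - i))).leadingCoeff
      = (X : Polynomial (Polynomial ℂ)) ^ K - C (Polynomial.X ^ N) := by
  rw [Ph_F_eq]
  set W : Polynomial (Polynomial ℂ) := (X : Polynomial (Polynomial ℂ)) ^ K - C (Polynomial.X ^ N)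
    with hW
  set E := ∑ i ∈ Finset.Icc 2 K, fm K (P i) * (C ((X : Polynomial (Polynomial ℂ)) ^ (K - i))
      * X ^ (N * (K - i))) with hE
  have hWne : W ≠ 0 := Wne K N hK
  have hEdeg : E.natDegree < N * K := E_natDegree_le K N hK hN P hdeg
  have hcoeff : (C W * X ^ (N * K) + E).coeff (N * K) = W := by
    rw [coeff_add, coeff_C_mul_X_pow, if_pos rfl, coeff_eq_zero_of_natDegree_lt hEdeg, add_zero]
  have hne : C W * X ^ (N * K) + E ≠ 0 := fun h => hWne (by rw [← hcoeff, h, coeff_zero])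
  have hdegle : (C W * X ^ (N * K) + E).natDegree ≤ N * K :=
    natDegree_add_le_of_degree_le (natDegree_C_mul_X_pow_le _ _) hEdeg.le
  have hdegeq : (C W * X ^ (N * K) + E).natDegree = N * K :=
    le_antisymm hdegle (le_natDegree_of_ne_zero (by rw [hcoeff]; exact hWne))
  exact ⟨hdegeq, by rw [leadingCoeff, hdegeq, hcoeff]⟩

lemma isUnit_of_deg0 {S : Type*} [CommSemiring S] {p : Polynomial S}
    (h0 : p.natDegree = 0) (hu : IsUnit p.leadingCoeff) : IsUnit p := by
  have hl : p.leadingCoeff = p.coeff 0 := by rw [leadingCoeff, h0]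
  have : p = C p.leadingCoeff := by rw [hl, ← eq_C_of_natDegree_eq_zero h0]
  rw [this]
  exact isUnit_C.mpr hu

lemma prod_of_roots (F : Type*) [Field F] (ζF a : F) (hζ : ζF ≠ 0) (s : Multiset F)
    (hmem : ∀ r ∈ s, ∃ i : ℕ, r = ζF ^ i * a) :
    ∃ d : F, d ≠ 0 ∧ (∃ j : ℕ, d = ζF ^ j) ∧ s.prod = d * a ^ (Multiset.card s) := by
  induction s using Multiset.induction_on with
  | empty => exact ⟨1, one_ne_zero, ⟨0, (pow_zero _).symm⟩, by simp⟩
  | cons r s ih =>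
      obtain ⟨d, hd0, ⟨j, hj⟩, hp⟩ := ih fun x hx => hmem x (Multiset.mem_cons_of_mem hx)
      obtain ⟨i, hi⟩ := hmem r (Multiset.mem_cons_self r s)
      refine ⟨ζF ^ i * d, mul_ne_zero (pow_ne_zero _ hζ) hd0, ⟨i + j, by rw [hj, pow_add]⟩, ?_⟩
      rw [Multiset.prod_cons, hp, hi, Multiset.card_cons, pow_succ]
      ring

lemma no_middle_divisor (K N : ℕ) (hK : 2 ≤ K) (hN : 1 ≤ N) (hcop : Nat.Coprime K N)
    (G : Polynomial (Polynomial ℂ)) (hGne : G ≠ 0) (hlcG : IsUnit G.leadingCoeff)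
    (hg1 : 1 ≤ G.natDegree) (hgK : G.natDegree < K)
    (hdvd : G ∣ ((X : Polynomial (Polynomial ℂ)) ^ K - C (Polynomial.X ^ N))) : False := by
  classical
  set R := Polynomial ℂ
  set F := RatFunc ℂ
  set g := G.natDegree with hg
  -- the coefficient substitution z ↦ z^K followed by inclusion into RatFunc
  set σ : R →+* R := eval₂RingHom Polynomial.C (Polynomial.X ^ K) with hσ
  set τ : R →+* F := (algebraMap R F).comp σ with hτ
  set ρ : Polynomial R →+* Polynomial F := mapRingHom τ with hρ
  set za : F := (algebraMap R F Polynomial.X) ^ N with hza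
  have hinj : Function.Injective (algebraMap R F) := IsFractionRing.injective R F
  -- image of W
  have hρW : ρ ((X : Polynomial R) ^ K - C (Polynomial.X ^ N)) = X ^ K - C (za ^ K) := by
    rw [hρ, coe_mapRingHom, Polynomial.map_sub, Polynomial.map_pow, map_X, map_C]
    congr 1
    have h1 : τ (Polynomial.X ^ N) = (algebraMap R F Polynomial.X) ^ (K * N) := by
      rw [hτ, RingHom.comp_apply, hσ, coe_eval₂RingHom, eval₂_X_pow, ← pow_mul, map_pow]
    rw [h1, hza, ← pow_mul, Nat.mul_comm]
  -- primitive root of unity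
  have hK0 : (K : ℕ) ≠ 0 := by omega
  set ζ : ℂ := Complex.exp (2 * Real.pi * Complex.I / K) with hζdef
  have hζ : IsPrimitiveRoot ζ K := Complex.isPrimitiveRoot_exp K hK0
  have hζne : ζ ≠ 0 := hζ.ne_zero hK0
  set ζF : F := algebraMap ℂ F ζ with hζF
  have hζFprim : IsPrimitiveRoot ζF K := hζ.map_of_injective (algebraMap ℂ F).injective
  have hζFne : ζF ≠ 0 := hζFprim.ne_zero hK0
  -- factorization
  have hfact : (X ^ K - C (za ^ K) : Polynomial F)
      = ∏ i ∈ Finset.range K, (X - C (ζF ^ i * za)) :=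
    X_pow_sub_C_eq_prod hζFprim (by omega) rfl
  have hWFne : (X ^ K - C (za ^ K) : Polynomial F) ≠ 0 := X_pow_sub_C_ne_zero (by omega) _
  have hWFsplits : (X ^ K - C (za ^ K) : Polynomial F).Splits := by
    rw [hfact]
    exact Splits.prod fun i _ => Splits.X_sub_C _
  have hrootsW : (X ^ K - C (za ^ K) : Polynomial F).roots
      = (Finset.range K).val.map (fun i => ζF ^ i * za) := by
    rw [hfact, Finset.prod_eq_multiset_prod]
    rw [show Multiset.map (fun i => X - C (ζF ^ i * za)) (Finset.range K).val
      = Multiset.map (fun r => X - C r)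
          (Multiset.map (fun i => ζF ^ i * za) (Finset.range K).val)
      from (Multiset.map_map (fun r => X - C r) (fun i => ζF ^ i * za)
        (Finset.range K).val).symm]
    exact roots_multiset_prod_X_sub_C _
  -- the unit leading coefficient of G
  obtain ⟨c, hcu, hcC⟩ := Polynomial.isUnit_iff.mp hlcG
  have hcne : c ≠ 0 := hcu.ne_zero
  set cF : F := algebraMap R F (Polynomial.C c) with hcF
  have hcFne : cF ≠ 0 := by
    rw [hcF]
    intro h
    exact hcne (by simpa using hinj (h.trans (map_zero _).symm))
  have hτlc : τ G.leadingCoeff = cF := by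
    rw [← hcC, hτ, RingHom.comp_apply, hσ, coe_eval₂RingHom, eval₂_C, hcF]
  -- image of G, normalized to be monic
  set G1 : Polynomial F := ρ G with hG1
  have hndG1 : G1.natDegree = g := by
    rw [hG1, hρ, coe_mapRingHom]
    exact natDegree_map_of_leadingCoeff_ne_zero τ (by rw [hτlc]; exact hcFne)
  have hcoefg : G1.coeff g = cF := by
    rw [hG1, hρ, coe_mapRingHom, coeff_map, hg]
    exact hτlc
  have hG1ne : G1 ≠ 0 := fun h => hcFne (by rw [← hcoefg, h, coeff_zero])
  have hlcG1 : G1.leadingCoeff = cF := by rw [leadingCoeff, hndG1]; exact hcoefg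
  set G2 : Polynomial F := Polynomial.C cF⁻¹ * G1 with hG2
  have hG2monic : G2.Monic := by
    rw [Monic, hG2, leadingCoeff_mul, leadingCoeff_C, hlcG1]
    exact inv_mul_cancel₀ hcFne
  have hndG2 : G2.natDegree = g := by
    rw [hG2, natDegree_mul (Polynomial.C_ne_zero.mpr (inv_ne_zero hcFne)) hG1ne,
      natDegree_C, hndG1, zero_add]
  have hdvd2 : G2 ∣ (X ^ K - C (za ^ K) : Polynomial F) := by
    obtain ⟨t, ht⟩ : G1 ∣ X ^ K - C (za ^ K) := by
      rw [← hρW, hG1]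
      exact map_dvd ρ hdvd
    refine ⟨Polynomial.C cF * t, ?_⟩
    rw [ht, hG2, mul_mul_mul_comm, mul_comm (Polynomial.C cF⁻¹), ← C_mul,
      mul_inv_cancel₀ hcFne, C_1, one_mul]
  have hG2splits : G2.Splits := hWFsplits.of_dvd hWFne hdvd2
  have hcard : Multiset.card G2.roots = g := by
    rw [← hndG2]
    exact splits_iff_card_roots.mp hG2splits
  have hmem : ∀ r ∈ G2.roots, ∃ i : ℕ, r = ζF ^ i * za := by
    intro r hr
    have hrW := Multiset.mem_of_le (roots.le_of_dvd hWFne hdvd2) hr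
    rw [hrootsW] at hrW
    obtain ⟨i, _, hi⟩ := Multiset.mem_map.mp hrW
    exact ⟨i, hi.symm⟩
  obtain ⟨d, hdne, ⟨j, hdj⟩, hprod⟩ := prod_of_roots F ζF za hζFne G2.roots hmem
  have hc0 : G2.coeff 0 = (-1) ^ g * (d * za ^ g) := by
    rw [hG2splits.coeff_zero_eq_prod_roots_of_monic hG2monic, hndG2, hprod, hcard]
  have hc0' : G2.coeff 0 = cF⁻¹ * τ (G.coeff 0) := by
    rw [hG2, coeff_C_mul, hG1, hρ, coe_mapRingHom, coeff_map]
  set e : R := G.coeff 0 with he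
  have key : τ e = cF * ((-1) ^ g * (d * za ^ g)) := by
    rw [← hc0, hc0', ← mul_assoc, mul_inv_cancel₀ hcFne, one_mul]
  have hd' : d = algebraMap R F (Polynomial.C (ζ ^ j)) := by
    rw [hdj, hζF, ← map_pow, IsScalarTower.algebraMap_apply ℂ R F, Polynomial.algebraMap_eq]
  set c' : ℂ := c * (-1 : ℂ) ^ g * ζ ^ j with hc'
  have hc'ne : c' ≠ 0 :=
    mul_ne_zero (mul_ne_zero hcne (pow_ne_zero _ (neg_ne_zero.mpr one_ne_zero)))
      (pow_ne_zero _ hζne)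
  have hCc' : (Polynomial.C c' : R) = Polynomial.C c * (-1) ^ g * Polynomial.C (ζ ^ j) := by
    rw [hc', map_mul, map_mul, map_pow, map_neg, map_one]
  have key2 : τ e = algebraMap R F (Polynomial.C c' * Polynomial.X ^ (N * g)) := by
    rw [key, map_mul, hCc', map_mul, map_mul, map_pow, map_pow, map_neg, map_one, ← hcF]
    rw [hd', hza, ← pow_mul]
    simp only [map_pow]
    ring
  have keyR : σ e = Polynomial.C c' * Polynomial.X ^ (N * g) := by
    apply hinj
    rw [← key2, hτ, RingHom.comp_apply]
  have hdeg1 : (σ e).natDegree = e.natDegree * K := by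
    have hcomp : σ e = e.comp (Polynomial.X ^ K) := rfl
    rw [hcomp, natDegree_comp, natDegree_X_pow]
  have hdegs : e.natDegree * K = N * g := by
    rw [← hdeg1, keyR, natDegree_C_mul_X_pow _ _ hc'ne]
  have hKdvd : K ∣ N * g := ⟨e.natDegree, by rw [← hdegs, Nat.mul_comm]⟩
  have hKg : K ∣ g := Nat.Coprime.dvd_of_dvd_mul_left hcop hKdvd
  have := Nat.le_of_dvd (lt_of_lt_of_le one_pos hg1) hKg
  omega

lemma W_irred (K N : ℕ) (hK : 2 ≤ K) (hN : 1 ≤ N) (hcop : Nat.Coprime K N) :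
    Irreducible ((X : Polynomial (Polynomial ℂ)) ^ K - C (Polynomial.X ^ N)) := by
  have hmonW : ((X : Polynomial (Polynomial ℂ)) ^ K - C (Polynomial.X ^ N)).Monic :=
    monic_X_pow_sub_C _ (by omega)
  have hndW : ((X : Polynomial (Polynomial ℂ)) ^ K - C (Polynomial.X ^ N)).natDegree = K :=
    natDegree_X_pow_sub_C
  constructor
  · intro hu
    have := natDegree_eq_zero_of_isUnit hu
    omega
  · intro G H hGH
    have hGne : G ≠ 0 := by rintro rfl; exact (Wne K N hK) (by rw [hGH, zero_mul])
    have hHne : H ≠ 0 := by rintro rfl; exact (Wne K N hK) (by rw [hGH, mul_zero])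
    have hlc : G.leadingCoeff * H.leadingCoeff = 1 := by
      rw [← leadingCoeff_mul, ← hGH]
      exact hmonW.leadingCoeff
    have hlcG : IsUnit G.leadingCoeff := IsUnit.of_mul_eq_one _ hlc
    have hlcH : IsUnit H.leadingCoeff := IsUnit.of_mul_eq_one _ (by rw [mul_comm]; exact hlc)
    have hnds : G.natDegree + H.natDegree = K := by
      rw [← hndW, hGH, natDegree_mul hGne hHne]
    by_cases hg0 : G.natDegree = 0
    · exact Or.inl (isUnit_of_deg0 hg0 hlcG)
    by_cases hh0 : H.natDegree = 0
    · exact Or.inr (isUnit_of_deg0 hh0 hlcH)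
    exact absurd ⟨H, hGH⟩
      (fun hdvd => no_middle_divisor K N hK hN hcop G hGne hlcG (by omega) (by omega) hdvd)

end SPIaux

theorem spectral_poly_irreducible (K N : ℕ) (hK : 2 ≤ K) (hN : 1 ≤ N)
    (hcop : Nat.Coprime K N) (P : ℕ → Polynomial ℂ)
    (hdeg : ∀ i, 2 ≤ i → i ≤ K → P i = 0 ∨ K * (P i).natDegree < N * (i - 1)) :
    Irreducible
      ((X : Polynomial (Polynomial ℂ)) ^ K - C (Polynomial.X ^ N)
        + ∑ i ∈ Finset.Icc 2 K, C (P i) * (X : Polynomial (Polynomial ℂ)) ^ (K - i)) := by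
  open SPIaux in
  have hmonW : ((X : Polynomial (Polynomial ℂ)) ^ K - C (Polynomial.X ^ N)).Monic :=
    monic_X_pow_sub_C _ (by omega)
  have hWne := SPIaux.Wne K N hK
  have hWdeg : ((X : Polynomial (Polynomial ℂ)) ^ K - C (Polynomial.X ^ N)).degree = (K : WithBot ℕ) := by
    rw [degree_eq_natDegree hWne, natDegree_X_pow_sub_C]
  have hSdeg : (∑ i ∈ Finset.Icc 2 K, C (P i) * (X : Polynomial (Polynomial ℂ)) ^ (K - i)).degree
      < ((X : Polynomial (Polynomial ℂ)) ^ K - C (Polynomial.X ^ N)).degree := by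
    rw [hWdeg]
    refine lt_of_le_of_lt (degree_sum_le _ _) ?_
    refine lt_of_le_of_lt (Finset.sup_le fun i hi => ?_) (?_ : ((K - 2 : ℕ) : WithBot ℕ) < _)
    · obtain ⟨h2i, hiK⟩ := Finset.mem_Icc.mp hi
      refine (degree_mul_le _ _).trans ?_
      refine le_trans (add_le_add degree_C_le (degree_X_pow _).le) ?_
      rw [zero_add]
      have hle : (K - i : ℕ) ≤ (K - 2 : ℕ) := by omega
      exact_mod_cast hle
    · have hlt : (K - 2 : ℕ) < K := by omega
      exact_mod_cast hlt
  have hmonF := hmonW.add_of_left hSdeg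
  have hndF : ((X : Polynomial (Polynomial ℂ)) ^ K - C (Polynomial.X ^ N)
      + ∑ i ∈ Finset.Icc 2 K, C (P i) * (X : Polynomial (Polynomial ℂ)) ^ (K - i)).natDegree
      = K := by
    refine natDegree_eq_of_degree_eq_some ?_
    rw [degree_add_eq_left_of_degree_lt hSdeg, hWdeg]
  constructor
  · intro hu
    have := natDegree_eq_zero_of_isUnit hu
    omega
  · intro G H hGH
    have hFne := hmonF.ne_zero
    have hGne : G ≠ 0 := by rintro rfl; rw [zero_mul] at hGH; exact hFne hGH
    have hHne : H ≠ 0 := by rintro rfl; rw [mul_zero] at hGH; exact hFne hGH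
    have hlcmul1 : G.leadingCoeff * H.leadingCoeff = 1 := by
      rw [← leadingCoeff_mul, ← hGH]
      exact hmonF.leadingCoeff
    have hlcG : IsUnit G.leadingCoeff := IsUnit.of_mul_eq_one _ hlcmul1
    have hlcH : IsUnit H.leadingCoeff :=
      IsUnit.of_mul_eq_one _ (by rw [mul_comm]; exact hlcmul1)
    have hnds : G.natDegree + H.natDegree = K := by
      rw [← hndF, hGH, natDegree_mul hGne hHne]
    obtain ⟨hndPh, hlcPh⟩ := SPIaux.Ph_F_natDegree K N hK hN P hdeg
    have hPhF : SPIaux.Ph K N ((X : Polynomial (Polynomial ℂ)) ^ K - C (Polynomial.X ^ N)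
        + ∑ i ∈ Finset.Icc 2 K, C (P i) * (X : Polynomial (Polynomial ℂ)) ^ (K - i))
        = SPIaux.Ph K N G * SPIaux.Ph K N H := by rw [hGH, map_mul]
    have hPhFne : SPIaux.Ph K N ((X : Polynomial (Polynomial ℂ)) ^ K - C (Polynomial.X ^ N)
        + ∑ i ∈ Finset.Icc 2 K, C (P i) * (X : Polynomial (Polynomial ℂ)) ^ (K - i)) ≠ 0 :=
      fun h => hWne (by rw [← hlcPh, h, leadingCoeff_zero])
    rw [hPhF] at hPhFne
    have hPGne : SPIaux.Ph K N G ≠ 0 := fun h => hPhFne (by rw [h, zero_mul])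
    have hPHne : SPIaux.Ph K N H ≠ 0 := fun h => hPhFne (by rw [h, mul_zero])
    have hlcmul : (SPIaux.Ph K N G).leadingCoeff * (SPIaux.Ph K N H).leadingCoeff
        = (X : Polynomial (Polynomial ℂ)) ^ K - C (Polynomial.X ^ N) := by
      rw [← leadingCoeff_mul, ← hPhF, hlcPh]
    have hndlc : ((SPIaux.Ph K N G).leadingCoeff).natDegree
        + ((SPIaux.Ph K N H).leadingCoeff).natDegree = K := by
      rw [← natDegree_mul (leadingCoeff_ne_zero.mpr hPGne) (leadingCoeff_ne_zero.mpr hPHne),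
        hlcmul, natDegree_X_pow_sub_C]
    have hbG : ((SPIaux.Ph K N G).leadingCoeff).natDegree ≤ G.natDegree :=
      SPIaux.Ph_coeff_natDegree_le K N G _
    have hbH : ((SPIaux.Ph K N H).leadingCoeff).natDegree ≤ H.natDegree :=
      SPIaux.Ph_coeff_natDegree_le K N H _
    rcases (SPIaux.W_irred K N hK hN hcop).isUnit_or_isUnit hlcmul.symm with hu | hu
    · refine Or.inl (SPIaux.isUnit_of_deg0 ?_ hlcG)
      have h0 := natDegree_eq_zero_of_isUnit hu
      omega
    · refine Or.inr (SPIaux.isUnit_of_deg0 ?_ hlcH)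
      have h0 := natDegree_eq_zero_of_isUnit hu
      omega
end

section
/- Let K ≥ 2 and N ≥ 1 be coprime integers, let b = (b_1,…,b_K) be an ordered K-partition of N, and let α = −Bb ∈ ℝ^K. For t ∈ ℂ let G_t be the K×K diagonal matrix with entries (G_t)_{ii} = exp(−tKα_i/(K+N)). Then for all t ∈ ℂ and all z ∈ ℂ: exp(tN/(K+N))·Φ_b(exp(−Kt/(K+N))·z) = G_t · Φ_b(z) · G_t^{−1}. (This is the statement that the Higgs bundle (ℰ_b, φ_b) is fixed by the ℂ^×-action (ℰ, φ) ↦ (ρ_t^*ℰ, e^t ρ_t^*φ) with ρ_t(z) = e^{−Kt/(K+N)}z.) -/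
open scoped BigOperators

/-- Cyclic successor on `Fin K`. -/
def cycSucc {K : ℕ} (i : Fin K) : Fin K := ⟨((i : ℕ) + 1) % K, Nat.mod_lt _ i.pos⟩

/-- The fixed-point Higgs field Φ_b(z). -/
def PhiB {K : ℕ} (b : Fin K → ℕ) (z : ℂ) : Matrix (Fin K) (Fin K) ℂ :=
  Matrix.of fun i j => if j = cycSucc i then z ^ (b i) else 0

lemma coe_sub_one' {K : ℕ} [NeZero K] (a : Fin K) :
    ((a - 1 : Fin K) : ℕ) = if a = 0 then K - 1 else (a : ℕ) - 1 := by
  rcases K with _ | m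
  · exact absurd rfl (NeZero.ne' 0)
  · simpa using Fin.coe_sub_one a

lemma key (K : ℕ) (hK : 2 ≤ K) (b : Fin K → ℕ) (i : Fin K) :
    (K : ℝ) * ((-(Bmat K).mulVec (fun j => (b j : ℝ))) (cycSucc i)
      - (-(Bmat K).mulVec (fun j => (b j : ℝ))) i)
      = (∑ j, (b j : ℝ)) - K * b i := by
  haveI : NeZero K := ⟨by omega⟩
  have hcyc : cycSucc i = i + 1 := by
    ext; simp [cycSucc, Fin.add_def, Fin.val_one']
  have hK0 : (K : ℝ) ≠ 0 := by positivity
  simp only [Pi.neg_apply, Matrix.mulVec, dotProduct, hcyc]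
  rw [neg_sub_neg, ← Finset.sum_sub_distrib, Finset.mul_sum]
  have hterm : ∀ j : Fin K,
      (K : ℝ) * (Bmat K i j * (b j) - Bmat K (i+1) j * (b j))
        = (1 + if j = i then -(K : ℝ) else 0) * b j := by
    intro j
    have h1 : j - (i + 1) = (j - i) - 1 := (sub_sub j i 1).symm
    have h2 : (((j - i - 1 : Fin K) : ℕ) : ℝ)
        = if j = i then (K : ℝ) - 1 else ((j - i : Fin K) : ℕ) - 1 := by
      rw [coe_sub_one']
      have h0 : j - i = 0 ↔ j = i := sub_eq_zero
      simp only [h0]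
      split_ifs with h3
      · have : 1 ≤ K := by omega
        push_cast [this]; ring
      · have : 1 ≤ ((j - i : Fin K) : ℕ) := by
          rcases Nat.eq_zero_or_pos ((j - i : Fin K) : ℕ) with h | h
          · exact absurd (h0.mp (Fin.ext h)) h3
          · exact h
        push_cast [this]; ring
    simp only [Bmat, Matrix.of_apply, h1, h2]
    split_ifs with h3
    · subst h3; field_simp
      have h5 : (((j - j : Fin K) : ℕ) : ℝ) = 0 := by simp
      rw [h5]; ring
    · field_simp; ring
  rw [Finset.sum_congr rfl fun j _ => hterm j]
  simp only [add_mul, one_mul, Finset.sum_add_distrib, ite_mul, zero_mul]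
  rw [Finset.sum_ite_eq' Finset.univ i (fun j => -(K:ℝ) * b j)]
  simp; ring

theorem PhiB_fixed_point (K N : ℕ) (hK : 2 ≤ K) (hN : 1 ≤ N)
    (hcop : Nat.Coprime K N) (b : Fin K → ℕ) (hb : ∑ i, b i = N)
    (α : Fin K → ℝ) (hα : α = -(Bmat K).mulVec (fun j => (b j : ℝ)))
    (G : ℂ → Matrix (Fin K) (Fin K) ℂ)
    (hG : ∀ t, G t = Matrix.diagonal fun i =>
      Complex.exp (-(t * K * (α i : ℂ)) / ((K : ℂ) + N))) :
    ∀ t z : ℂ,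
      Complex.exp (t * N / ((K : ℂ) + N)) •
          PhiB b (Complex.exp (-((K : ℂ) * t) / ((K : ℂ) + N)) * z)
        = G t * PhiB b z * (G t)⁻¹ := by
  intro t z
  have hKN : (K : ℂ) + N ≠ 0 := by
    have : ((K + N : ℕ) : ℂ) ≠ 0 := Nat.cast_ne_zero.mpr (by omega)
    push_cast at this; exact this
  rw [hG]
  have hinv : (Matrix.diagonal fun i => Complex.exp (-(t * K * (α i : ℂ)) / ((K : ℂ) + N)))⁻¹
      = Matrix.diagonal fun i => Complex.exp ((t * K * (α i : ℂ)) / ((K : ℂ) + N)) := by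
    apply Matrix.inv_eq_right_inv
    rw [Matrix.diagonal_mul_diagonal]
    have : (fun i => Complex.exp (-(t * K * (α i : ℂ)) / ((K : ℂ) + N))
        * Complex.exp ((t * K * (α i : ℂ)) / ((K : ℂ) + N))) = fun _ : Fin K => (1 : ℂ) := by
      funext k
      rw [← Complex.exp_add, neg_div, neg_add_cancel, Complex.exp_zero]
    rw [this, Matrix.diagonal_one]
  rw [hinv, Matrix.mul_assoc]
  ext i j
  rw [Matrix.diagonal_mul, Matrix.mul_diagonal, Matrix.smul_apply]
  simp only [PhiB, Matrix.of_apply]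
  by_cases hij : j = cycSucc i
  · subst hij
    rw [if_pos rfl, if_pos rfl, smul_eq_mul, mul_pow, ← Complex.exp_nat_mul]
    have hkey := key K hK b i
    rw [← Nat.cast_sum, hb] at hkey
    have hc : (K : ℂ) * (((α (cycSucc i) : ℝ) : ℂ) - ((α i : ℝ) : ℂ)) = (N : ℂ) - K * b i := by
      rw [hα]
      exact_mod_cast hkey
    have hexp : Complex.exp (t * N / ((K : ℂ) + N)) * Complex.exp ((b i : ℂ) * (-((K : ℂ) * t) / ((K : ℂ) + N)))
        = Complex.exp (-(t * K * (α i : ℂ)) / ((K : ℂ) + N)) * Complex.exp ((t * K * (α (cycSucc i) : ℂ)) / ((K : ℂ) + N)) := by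
      rw [← Complex.exp_add, ← Complex.exp_add]
      congr 1
      linear_combination (-(t / ((K : ℂ) + N))) * hc
    linear_combination (z ^ b i) * hexp
  · simp [if_neg hij]
end

section
/- Let K ≥ 2 and suppose u_1,…,u_K : (0,∞) → ℝ are twice differentiable, satisfy the radial affine Toda system, satisfy ∑_{i=1}^K u_i(ρ) = 0 for all ρ > 0, and each u_i is bounded on [1,∞). Then the function F(ρ) = ∑_{i=1}^K u_i(ρ)² is nonincreasing on (0,∞) and F(ρ) → 0 as ρ → ∞. -/
open scoped BigOperators

/-- Cyclic predecessor on `Fin K`. -/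
def cycPred {K : ℕ} (i : Fin K) : Fin K := ⟨((i : ℕ) + (K - 1)) % K, Nat.mod_lt _ i.pos⟩


lemma cycSucc_cycPred {K : ℕ} (i : Fin K) : cycSucc (cycPred i) = i := by
  have hK : 0 < K := i.pos
  apply Fin.ext
  show ((i.val + (K - 1)) % K + 1) % K = i.val
  rw [Nat.mod_add_mod]
  have h : i.val + (K - 1) + 1 = i.val + K := by omega
  rw [h, Nat.add_mod_right, Nat.mod_eq_of_lt i.isLt]

lemma cycPred_cycSucc {K : ℕ} (i : Fin K) : cycPred (cycSucc i) = i := by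
  have hK : 0 < K := i.pos
  apply Fin.ext
  show ((i.val + 1) % K + (K - 1)) % K = i.val
  rw [Nat.mod_add_mod]
  have h : i.val + 1 + (K - 1) = i.val + K := by omega
  rw [h, Nat.add_mod_right, Nat.mod_eq_of_lt i.isLt]

def cycEquiv (K : ℕ) : Fin K ≃ Fin K :=
  ⟨cycSucc, cycPred, cycPred_cycSucc, cycSucc_cycPred⟩

noncomputable def todaG (K : ℕ) (x : Fin K → ℝ) : ℝ :=
  ∑ i, (x i - x (cycSucc i)) * (Real.exp (x i - x (cycSucc i)) - 1)

lemma mul_exp_sub_one_nonneg (t : ℝ) : 0 ≤ t * (Real.exp t - 1) := by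
  rcases le_total 0 t with h | h
  · have h1 : (1:ℝ) ≤ Real.exp t := by
      calc (1:ℝ) = Real.exp 0 := (Real.exp_zero).symm
      _ ≤ Real.exp t := Real.exp_le_exp.mpr h
    exact mul_nonneg h (by linarith)
  · have h1 : Real.exp t ≤ 1 := by
      calc Real.exp t ≤ Real.exp 0 := Real.exp_le_exp.mpr h
      _ = 1 := Real.exp_zero
    have h2 : Real.exp t - 1 ≤ 0 := by linarith
    nlinarith

lemma mul_exp_sub_one_eq_zero {t : ℝ} (h : t * (Real.exp t - 1) = 0) : t = 0 := by
  by_contra ht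
  rcases lt_or_gt_of_ne ht with h1 | h1
  · have : Real.exp t < 1 := by
      calc Real.exp t < Real.exp 0 := Real.exp_lt_exp.mpr h1
      _ = 1 := Real.exp_zero
    nlinarith
  · have : (1:ℝ) < Real.exp t := by
      calc (1:ℝ) = Real.exp 0 := (Real.exp_zero).symm
      _ < Real.exp t := Real.exp_lt_exp.mpr h1
    nlinarith

lemma todaG_nonneg (K : ℕ) (x : Fin K → ℝ) : 0 ≤ todaG K x :=
  Finset.sum_nonneg fun i _ => mul_exp_sub_one_nonneg _

lemma sum_cycSucc (K : ℕ) (x : Fin K → ℝ) : ∑ i, x (cycSucc i) = ∑ i, x i :=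
  Equiv.sum_comp (cycEquiv K) x

lemma sum_w_zero (K : ℕ) (x : Fin K → ℝ) : ∑ i, (x i - x (cycSucc i)) = 0 := by
  rw [Finset.sum_sub_distrib, sum_cycSucc]
  ring

lemma key_sum (K : ℕ) (x : Fin K → ℝ) :
    ∑ i, x i * (Real.exp (x i - x (cycSucc i)) - Real.exp (x (cycPred i) - x i))
      = todaG K x := by
  have h1 : ∑ i, x i * Real.exp (x (cycPred i) - x i)
      = ∑ i, x (cycSucc i) * Real.exp (x i - x (cycSucc i)) := by
    rw [← Equiv.sum_comp (cycEquiv K) (fun j => x j * Real.exp (x (cycPred j) - x j))]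
    refine Finset.sum_congr rfl fun i _ => ?_
    simp [cycEquiv, cycPred_cycSucc]
  have h2 := sum_w_zero K x
  unfold todaG
  simp only [mul_sub, sub_mul, mul_one, Finset.sum_sub_distrib] at *
  rw [h1]
  linarith

lemma cyc_const (K : ℕ) (hK : 0 < K) (x : Fin K → ℝ) (h : ∀ i, x i = x (cycSucc i)) :
    ∀ j : Fin K, x j = x ⟨0, hK⟩ := by
  have key : ∀ n : ℕ, x ⟨n % K, Nat.mod_lt _ hK⟩ = x ⟨0, hK⟩ := by
    intro n
    induction n with
    | zero => simp
    | succ n ih =>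
      have hs : cycSucc (⟨n % K, Nat.mod_lt _ hK⟩ : Fin K) = ⟨(n+1) % K, Nat.mod_lt _ hK⟩ := by
        apply Fin.ext
        show (n % K + 1) % K = (n + 1) % K
        rw [Nat.mod_add_mod]
      rw [← ih, ← hs, ← h]
  intro j
  have hj := key j.val
  have hje : (⟨j.val % K, Nat.mod_lt _ hK⟩ : Fin K) = j := Fin.ext (Nat.mod_eq_of_lt j.isLt)
  rwa [hje] at hj

lemma todaG_pos (K : ℕ) (hK : 0 < K) (x : Fin K → ℝ) (hsum : ∑ i, x i = 0) (hx : x ≠ 0) :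
    0 < todaG K x := by
  rcases (todaG_nonneg K x).eq_or_lt with h0 | h
  · exfalso
    have hz : ∀ i ∈ Finset.univ, (x i - x (cycSucc i)) * (Real.exp (x i - x (cycSucc i)) - 1) = 0 := by
      rw [← Finset.sum_eq_zero_iff_of_nonneg (fun i _ => mul_exp_sub_one_nonneg _)]
      exact h0.symm
    have hc : ∀ i, x i = x (cycSucc i) := by
      intro i
      have := mul_exp_sub_one_eq_zero (hz i (Finset.mem_univ i))
      linarith
    have hconst := cyc_const K hK x hc
    have hx0 : x ⟨0, hK⟩ = 0 := by
      have : ∑ i, x i = ∑ i : Fin K, x ⟨0, hK⟩ := Finset.sum_congr rfl fun i _ => hconst i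
      rw [hsum, Finset.sum_const, Finset.card_univ, Fintype.card_fin] at this
      have hKne : (K : ℝ) ≠ 0 := Nat.cast_ne_zero.mpr hK.ne'
      rw [nsmul_eq_mul] at this
      exact (mul_eq_zero.mp this.symm).resolve_left hKne
    apply hx
    funext j
    rw [hconst j, hx0]; rfl
  · exact h

theorem toda_norm_squared_decreasing_to_zero (K : ℕ) (hK : 2 ≤ K)
    (u : Fin K → ℝ → ℝ)
    (hdiff : ∀ i, ∀ ρ : ℝ, 0 < ρ →
      DifferentiableAt ℝ (u i) ρ ∧ DifferentiableAt ℝ (deriv (u i)) ρ)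
    (htoda : ∀ i, ∀ ρ : ℝ, 0 < ρ →
      deriv (deriv (u i)) ρ + (1 / ρ) * deriv (u i) ρ
        = Real.exp (u i ρ - u (cycSucc i) ρ) - Real.exp (u (cycPred i) ρ - u i ρ))
    (hsum : ∀ ρ : ℝ, 0 < ρ → ∑ i, u i ρ = 0)
    (hbdd : ∀ i, ∃ C : ℝ, ∀ ρ : ℝ, 1 ≤ ρ → |u i ρ| ≤ C) :
    AntitoneOn (fun r => ∑ i, (u i r) ^ 2) (Set.Ioi (0 : ℝ)) ∧
      Filter.Tendsto (fun r => ∑ i, (u i r) ^ 2) Filter.atTop (nhds 0) := by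
  have hKpos : 0 < K := by omega
  set F : ℝ → ℝ := fun r => ∑ i, (u i r) ^ 2 with hFdef
  set D : ℝ → ℝ := fun r => ∑ i, 2 * u i r * deriv (u i) r with hDdef
  set φ : ℝ → ℝ := fun r => r * D r with hφdef
  -- derivative of F
  have hF' : ∀ ρ : ℝ, 0 < ρ → HasDerivAt F (D ρ) ρ := by
    intro ρ hρ
    have : HasDerivAt (fun r => ∑ i, (u i r) ^ 2)
        (∑ i, 2 * u i ρ * deriv (u i) ρ) ρ := by
      apply HasDerivAt.fun_sum
      intro i _
      have h1 : HasDerivAt (u i) (deriv (u i) ρ) ρ := (hdiff i ρ hρ).1.hasDerivAt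
      have := h1.fun_pow 2
      simpa [mul_comm, mul_assoc, mul_left_comm] using this
    exact this
  -- derivative of φ
  have hφ' : ∀ ρ : ℝ, 0 < ρ →
      HasDerivAt φ (2 * ρ * (∑ i, (deriv (u i) ρ) ^ 2)
        + 2 * ρ * todaG K (fun i => u i ρ)) ρ := by
    intro ρ hρ
    have hρne : ρ ≠ 0 := ne_of_gt hρ
    have hD' : HasDerivAt D
        (∑ i, (2 * deriv (u i) ρ * deriv (u i) ρ + 2 * u i ρ * deriv (deriv (u i)) ρ)) ρ := by
      apply HasDerivAt.fun_sum
      intro i _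
      have h1 : HasDerivAt (u i) (deriv (u i) ρ) ρ := (hdiff i ρ hρ).1.hasDerivAt
      have h2 : HasDerivAt (deriv (u i)) (deriv (deriv (u i)) ρ) ρ := (hdiff i ρ hρ).2.hasDerivAt
      have h3 := (h1.const_mul (2:ℝ)).fun_mul h2
      simpa [mul_comm, mul_assoc, mul_left_comm] using h3
    have hφd : HasDerivAt φ
        (1 * D ρ + ρ * ∑ i, (2 * deriv (u i) ρ * deriv (u i) ρ
          + 2 * u i ρ * deriv (deriv (u i)) ρ)) ρ := (hasDerivAt_id ρ).mul hD'
    have hkey : ∀ i : Fin K,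
        2 * u i ρ * deriv (u i) ρ + ρ * (2 * deriv (u i) ρ * deriv (u i) ρ
          + 2 * u i ρ * deriv (deriv (u i)) ρ)
        = 2 * ρ * (deriv (u i) ρ) ^ 2
          + 2 * ρ * (u i ρ * (Real.exp (u i ρ - u (cycSucc i) ρ)
              - Real.exp (u (cycPred i) ρ - u i ρ))) := by
      intro i
      have ht := htoda i ρ hρ
      have ht' : deriv (deriv (u i)) ρ
          = (Real.exp (u i ρ - u (cycSucc i) ρ) - Real.exp (u (cycPred i) ρ - u i ρ))
            - (1 / ρ) * deriv (u i) ρ := by linarith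
      rw [ht']
      field_simp
      ring
    have heq : 1 * D ρ + ρ * ∑ i, (2 * deriv (u i) ρ * deriv (u i) ρ
          + 2 * u i ρ * deriv (deriv (u i)) ρ)
        = 2 * ρ * (∑ i, (deriv (u i) ρ) ^ 2) + 2 * ρ * todaG K (fun i => u i ρ) := by
      rw [← key_sum K (fun i => u i ρ)]
      rw [one_mul, hDdef]
      simp only []
      rw [Finset.mul_sum, Finset.mul_sum, Finset.mul_sum, ← Finset.sum_add_distrib,
        ← Finset.sum_add_distrib]
      exact Finset.sum_congr rfl fun i _ => hkey i
    rw [heq] at hφd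
    exact hφd
  have hgnonneg : ∀ x : Fin K → ℝ, 0 ≤ todaG K x := todaG_nonneg K
  have hsq : ∀ ρ : ℝ, 0 ≤ ∑ i, (deriv (u i) ρ) ^ 2 :=
    fun ρ => Finset.sum_nonneg fun i _ => sq_nonneg _
  -- φ is monotone on Ioi 0
  have hφmono : MonotoneOn φ (Set.Ioi (0:ℝ)) := by
    apply monotoneOn_of_deriv_nonneg (convex_Ioi 0)
    · exact fun ρ hρ => ((hφ' ρ hρ).differentiableAt.continuousAt).continuousWithinAt
    · rw [interior_Ioi]
      exact fun ρ hρ => (hφ' ρ hρ).differentiableAt.differentiableWithinAt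
    · intro ρ hρ
      rw [interior_Ioi] at hρ
      rw [(hφ' ρ hρ).deriv]
      have := hgnonneg (fun i => u i ρ)
      have := hsq ρ
      have hρ' : (0:ℝ) < ρ := hρ
      positivity
  -- boundedness
  choose Cs hCs using hbdd
  set Cb : ℝ := ∑ i, max (Cs i) 0 with hCbdef
  have hCb0 : 0 ≤ Cb := Finset.sum_nonneg fun i _ => le_max_right _ _
  have hCb : ∀ i, ∀ ρ : ℝ, 1 ≤ ρ → |u i ρ| ≤ Cb := by
    intro i ρ hρ
    calc |u i ρ| ≤ Cs i := hCs i ρ hρ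
    _ ≤ max (Cs i) 0 := le_max_left _ _
    _ ≤ Cb := Finset.single_le_sum (f := fun j => max (Cs j) 0) (fun j _ => le_max_right _ _) (Finset.mem_univ i)
  have hFnonneg : ∀ ρ : ℝ, 0 ≤ F ρ := fun ρ => Finset.sum_nonneg fun i _ => sq_nonneg _
  have hFbound : ∀ ρ : ℝ, 1 ≤ ρ → F ρ ≤ K * Cb ^ 2 := by
    intro ρ hρ
    have : F ρ ≤ ∑ _i : Fin K, Cb ^ 2 := by
      apply Finset.sum_le_sum
      intro i _
      have h1 := hCb i ρ hρ
      have := abs_nonneg (u i ρ)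
      nlinarith [sq_abs (u i ρ)]
    simpa [Finset.sum_const, Finset.card_univ, nsmul_eq_mul] using this
  -- D ≤ 0 on Ioi 0
  have hDnonpos : ∀ ρ : ℝ, 0 < ρ → D ρ ≤ 0 := by
    intro ρ₀ hρ₀
    by_contra hpos
    push_neg at hpos
    set c : ℝ := ρ₀ * D ρ₀ with hcdef
    have hc : 0 < c := mul_pos hρ₀ hpos
    set a : ℝ := max ρ₀ 1 with hadef
    have ha1 : (1:ℝ) ≤ a := le_max_right _ _
    have ha0 : (0:ℝ) < a := lt_of_lt_of_le one_pos ha1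
    have haρ₀ : ρ₀ ≤ a := le_max_left _ _
    have hφge : ∀ r : ℝ, a ≤ r → c ≤ φ r := by
      intro r hr
      exact hφmono (Set.mem_Ioi.mpr hρ₀) (Set.mem_Ioi.mpr (lt_of_lt_of_le ha0 hr))
        (le_trans haρ₀ hr)
    set ψ : ℝ → ℝ := fun r => F r - c * Real.log r with hψdef
    have hψ' : ∀ r : ℝ, 0 < r → HasDerivAt ψ (D r - c * r⁻¹) r := by
      intro r hr
      exact (hF' r hr).sub ((Real.hasDerivAt_log (ne_of_gt hr)).const_mul c)
    have hψmono : MonotoneOn ψ (Set.Ici a) := by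
      apply monotoneOn_of_deriv_nonneg (convex_Ici a)
      · intro r hr
        exact ((hψ' r (lt_of_lt_of_le ha0 hr)).differentiableAt.continuousAt).continuousWithinAt
      · rw [interior_Ici]
        intro r hr
        exact (hψ' r (lt_trans ha0 hr)).differentiableAt.differentiableWithinAt
      · intro r hr
        rw [interior_Ici] at hr
        have hr0 : 0 < r := lt_trans ha0 hr
        rw [(hψ' r hr0).deriv]
        have h1 : c ≤ r * D r := hφge r (le_of_lt hr)
        have h2 : c * r⁻¹ ≤ (r * D r) * r⁻¹ :=
          mul_le_mul_of_nonneg_right h1 (inv_nonneg.mpr (le_of_lt hr0))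
        have h3 : (r * D r) * r⁻¹ = D r := by field_simp
        linarith
    -- pick big r
    set t : ℝ := (K * Cb ^ 2 + 1 + c * Real.log a) / c with htdef
    set r : ℝ := max a (Real.exp t) with hrdef
    have hra : a ≤ r := le_max_left _ _
    have hr0 : 0 < r := lt_of_lt_of_le ha0 hra
    have hlogr : t ≤ Real.log r := by
      rw [Real.le_log_iff_exp_le hr0]
      exact le_max_right _ _
    have hψle := hψmono (Set.mem_Ici.mpr (le_refl a)) (Set.mem_Ici.mpr hra) hra
    -- ψ a ≤ ψ r : F a - c log a ≤ F r - c log r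
    have hFr : K * Cb ^ 2 + 1 ≤ F r := by
      have h1 : c * t ≤ c * Real.log r := mul_le_mul_of_nonneg_left hlogr (le_of_lt hc)
      have h2 : c * t = K * Cb ^ 2 + 1 + c * Real.log a := by
        rw [htdef, mul_div_cancel₀ _ (ne_of_gt hc)]
      have h3 := hFnonneg a
      simp only [hψdef] at hψle
      linarith
    have := hFbound r (le_trans ha1 hra)
    linarith
  have hφnonpos : ∀ r : ℝ, 0 < r → φ r ≤ 0 := by
    intro r hr
    have := hDnonpos r hr
    exact mul_nonpos_iff.mpr (Or.inl ⟨le_of_lt hr, this⟩)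
  -- F is antitone on Ioi 0
  have hFanti : AntitoneOn F (Set.Ioi (0:ℝ)) := by
    apply antitoneOn_of_deriv_nonpos (convex_Ioi 0)
    · exact fun ρ hρ => ((hF' ρ hρ).differentiableAt.continuousAt).continuousWithinAt
    · rw [interior_Ioi]
      exact fun ρ hρ => (hF' ρ hρ).differentiableAt.differentiableWithinAt
    · intro ρ hρ
      rw [interior_Ioi] at hρ
      rw [(hF' ρ hρ).deriv]
      exact hDnonpos ρ hρ
  refine ⟨hFanti, ?_⟩
  -- the limit
  set Ft : ℝ → ℝ := fun r => F (max r 1) with hFtdef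
  have hFtanti : Antitone Ft := by
    intro x y hxy
    exact hFanti (Set.mem_Ioi.mpr (lt_of_lt_of_le one_pos (le_max_right x 1)))
      (Set.mem_Ioi.mpr (lt_of_lt_of_le one_pos (le_max_right y 1)))
      (max_le_max hxy (le_refl 1))
  have hFtbdd : BddBelow (Set.range Ft) := by
    refine ⟨0, ?_⟩
    rintro v ⟨r, rfl⟩
    exact hFnonneg _
  have hlim : Filter.Tendsto Ft Filter.atTop (nhds (⨅ r : ℝ, Ft r)) :=
    tendsto_atTop_ciInf hFtanti hFtbdd
  set L : ℝ := ⨅ r : ℝ, Ft r with hLdef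
  have hL0 : 0 ≤ L := le_ciInf fun r => hFnonneg _
  have hLle : ∀ r : ℝ, 1 ≤ r → L ≤ F r := by
    intro r hr
    have h1 : L ≤ Ft r := ciInf_le hFtbdd r
    have h2 : Ft r = F r := by
      show F (max r 1) = F r
      rw [max_eq_left hr]
    linarith
  have hLzero : L = 0 := by
    by_contra hLne
    have hL : 0 < L := lt_of_le_of_ne hL0 (Ne.symm hLne)
    -- compact set
    set A : Set (Fin K → ℝ) := {x | (∑ i, x i = 0) ∧ L ≤ ∑ i, (x i) ^ 2} with hAdef
    set B : Set (Fin K → ℝ) := Metric.closedBall 0 Cb with hBdef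
    have hAclosed : IsClosed A := by
      apply IsClosed.inter
      · exact isClosed_eq (continuous_finset_sum _ fun i _ => continuous_apply i)
          continuous_const
      · exact isClosed_le continuous_const
          (continuous_finset_sum _ fun i _ => (continuous_apply i).pow 2)
    have hScompact : IsCompact (A ∩ B) :=
      (isCompact_closedBall (0 : Fin K → ℝ) Cb).inter_left hAclosed
    have hmem : ∀ r : ℝ, 1 ≤ r → (fun i => u i r) ∈ A ∩ B := by
      intro r hr
      have hr0 : (0:ℝ) < r := lt_of_lt_of_le one_pos hr
      refine ⟨⟨hsum r hr0, hLle r hr⟩, ?_⟩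
      rw [hBdef, Metric.mem_closedBall, dist_zero_right]
      rw [pi_norm_le_iff_of_nonneg hCb0]
      intro i
      rw [Real.norm_eq_abs]
      exact hCb i r hr
    have hSne : (A ∩ B).Nonempty := ⟨_, hmem 1 le_rfl⟩
    have hgcont : Continuous (todaG K) := by
      unfold todaG
      fun_prop
    obtain ⟨x₀, hx₀S, hx₀min⟩ := hScompact.exists_isMinOn hSne hgcont.continuousOn
    set δ : ℝ := todaG K x₀ with hδdef
    have hδpos : 0 < δ := by
      apply todaG_pos K hKpos x₀ hx₀S.1.1
      intro hx0
      have : L ≤ ∑ i, (x₀ i) ^ 2 := hx₀S.1.2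
      rw [hx0] at this
      simp at this
      linarith
    have hgδ : ∀ r : ℝ, 1 ≤ r → δ ≤ todaG K (fun i => u i r) :=
      fun r hr => hx₀min (hmem r hr)
    -- χ := φ - δ r² is monotone on Ici 1
    set χ : ℝ → ℝ := fun r => φ r - δ * r ^ 2 with hχdef
    have hχ' : ∀ r : ℝ, 0 < r → HasDerivAt χ
        (2 * r * (∑ i, (deriv (u i) r) ^ 2) + 2 * r * todaG K (fun i => u i r)
          - δ * (2 * r)) r := by
      intro r hr
      have h1 := (hasDerivAt_pow 2 r).const_mul δ
      have h2 : HasDerivAt (fun x : ℝ => δ * x ^ 2) (δ * (2 * r)) r := by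
        simpa using h1
      exact (hφ' r hr).sub h2
    have hχmono : MonotoneOn χ (Set.Ici (1:ℝ)) := by
      apply monotoneOn_of_deriv_nonneg (convex_Ici 1)
      · intro r hr
        exact ((hχ' r (lt_of_lt_of_le one_pos hr)).differentiableAt.continuousAt).continuousWithinAt
      · rw [interior_Ici]
        intro r hr
        exact (hχ' r (lt_trans one_pos hr)).differentiableAt.differentiableWithinAt
      · intro r hr
        rw [interior_Ici] at hr
        have hr0 : (0:ℝ) < r := lt_trans one_pos hr
        rw [(hχ' r hr0).deriv]
        have h1 := hgδ r (le_of_lt hr)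
        have h2 := hsq r
        nlinarith
    -- pick big r
    have hφ1 : φ 1 ≤ 0 := hφnonpos 1 one_pos
    set s : ℝ := (2 * δ - φ 1) / δ with hsdef
    have hs0 : 0 ≤ s := div_nonneg (by linarith) (le_of_lt hδpos)
    set r : ℝ := Real.sqrt s + 1 with hrdef
    have hr1 : (1:ℝ) ≤ r := by
      have := Real.sqrt_nonneg s
      linarith
    have hr0 : (0:ℝ) < r := lt_of_lt_of_le one_pos hr1
    have hrs : s ≤ r ^ 2 := by
      have h1 := Real.sq_sqrt hs0
      have h2 := Real.sqrt_nonneg s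
      nlinarith
    have hχle := hχmono (Set.mem_Ici.mpr (le_refl (1:ℝ))) (Set.mem_Ici.mpr hr1) hr1
    simp only [hχdef] at hχle
    have hδs : δ * s = 2 * δ - φ 1 := by
      rw [hsdef, mul_div_cancel₀ _ (ne_of_gt hδpos)]
    have hφr : δ ≤ φ r := by nlinarith
    have := hφnonpos r hr0
    linarith
  -- conclude
  have heq : F =ᶠ[Filter.atTop] Ft := by
    filter_upwards [Filter.eventually_ge_atTop (1:ℝ)] with r hr
    show F r = F (max r 1)
    rw [max_eq_left hr]
  have := hlim.congr' heq.symm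
  rwa [hLzero] at this
end

section
/- Fix u, z ∈ ℂ. For w, γ ∈ ℂ with w ≠ 0, γ ≠ 0 and γ² − w³ = u, let Ψ_{w,γ}(z) be the 2×2 complex matrix with rows (γ, z² + zw + w²) and (z − w, −γ), and let g = i·[[γ/w, w + z], [0, −w/γ]] (which has determinant 1). Then g·Ψ_{w,γ}(z)·g^{−1} converges to the matrix Φ_u(z) with rows (0, z³ + u) and (1, 0) as |w| → ∞: for every ε > 0 there exists R > 0 such that for all such (w, γ) with |w| ≥ R, every entry of g·Ψ_{w,γ}(z)·g^{−1} − Φ_u(z) has modulus less than ε. -/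
open Complex

/-- The Higgs field on the big stratum of ℳ_{2,3}:
Ψ_{w,γ}(z) = [[γ, z² + zw + w²],[z − w, −γ]]. -/
noncomputable def PsiBig (w γ z : ℂ) : Matrix (Fin 2) (Fin 2) ℂ :=
  !![γ, z ^ 2 + z * w + w ^ 2; z - w, -γ]

/-- The Higgs field on the small stratum of ℳ_{2,3}: Φ_u(z) = [[0, z³+u],[1,0]]. -/
noncomputable def PhiSmall (u z : ℂ) : Matrix (Fin 2) (Fin 2) ℂ :=
  !![0, z ^ 3 + u; 1, 0]

/-- The gauge transformation g = i·[[γ/w, w+z],[0, −w/γ]]. -/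
noncomputable def gGauge (w γ z : ℂ) : Matrix (Fin 2) (Fin 2) ℂ :=
  Complex.I • !![γ / w, w + z; 0, -w / γ]

lemma gGauge_inv (w γ z : ℂ) (hw : w ≠ 0) (hγ : γ ≠ 0) :
    (gGauge w γ z)⁻¹ = Complex.I • !![-w/γ, -(w+z); 0, γ/w] := by
  apply Matrix.inv_eq_right_inv
  ext i j
  fin_cases i <;> fin_cases j <;>
    simp [gGauge, Matrix.mul_apply, Fin.sum_univ_two, Matrix.smul_apply, Matrix.one_apply] <;>
    field_simp <;> ring_nf <;> simp [Complex.I_sq]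

lemma conj_eq (w γ z : ℂ) (hw : w ≠ 0) (hγ : γ ≠ 0) :
    gGauge w γ z * PsiBig w γ z * (Complex.I • !![-w/γ, -(w+z); 0, γ/w])
      - PhiSmall (γ^2 - w^3) z
    = !![((γ^2 - w^3) + w*z^2)/γ, (γ^2 - w^3)*z*(w-z)/w^2;
         -(w^2*z + (γ^2 - w^3))/γ^2, -(((γ^2 - w^3) + w*z^2)/γ)] := by
  have key : gGauge w γ z * PsiBig w γ z * (Complex.I • !![-w/γ, -(w+z); 0, γ/w])
      = (-1 : ℂ) • (!![γ / w, w + z; 0, -w / γ] * PsiBig w γ z * !![-w/γ, -(w+z); 0, γ/w]) := by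
    rw [gGauge, smul_mul_assoc, smul_mul_assoc, mul_smul_comm, smul_smul, Complex.I_mul_I]
  rw [key]
  ext i j
  fin_cases i <;> fin_cases j <;>
    simp only [PsiBig, PhiSmall, Matrix.sub_apply, Matrix.smul_apply, Matrix.mul_apply,
      Fin.sum_univ_two, Matrix.cons_val', Matrix.cons_val_zero, Fin.zero_eta, Fin.mk_one, Fin.isValue, Matrix.of_apply,
      Matrix.cons_val_one, Matrix.head_cons, Matrix.empty_val', Matrix.cons_val_fin_one,
      Matrix.head_fin_const, smul_eq_mul] <;>
    field_simp <;> ring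

set_option maxHeartbeats 1000000 in
theorem big_stratum_limit_to_small (u z : ℂ) :
    ∀ ε : ℝ, 0 < ε → ∃ R : ℝ, 0 < R ∧
      ∀ w γ : ℂ, w ≠ 0 → γ ≠ 0 → γ ^ 2 - w ^ 3 = u → R ≤ ‖w‖ →
        ∀ i j : Fin 2,
          ‖(gGauge w γ z * PsiBig w γ z * (gGauge w γ z)⁻¹ - PhiSmall u z) i j‖
            < ε := by
  intro ε hε
  set a := ‖u‖ with ha
  set b := ‖z‖ with hb
  refine ⟨1 + 2*a + 2*(a+b^2)^2/ε^2 + (a*b+a*b^2)/ε + (2*b+2*a)/ε, by positivity, ?_⟩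
  intro w γ hw hγ hu hR i j
  set t := ‖w‖ with htdef
  have ha0 : 0 ≤ a := norm_nonneg u
  have hb0 : 0 ≤ b := norm_nonneg z
  have he1 : (0:ℝ) ≤ 2*a := by positivity
  have he2 : (0:ℝ) ≤ 2*(a+b^2)^2/ε^2 := by positivity
  have he3 : (0:ℝ) ≤ (a*b+a*b^2)/ε := by positivity
  have he4 : (0:ℝ) ≤ (2*b+2*a)/ε := by positivity
  have ht1 : (1:ℝ) ≤ t := by linarith
  have ht0 : (0:ℝ) < t := by linarith
  have hta : 2*a ≤ t := by linarith
  have ht2 : (1:ℝ) ≤ t^2 := by nlinarith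
  have ht3 : t ≤ t^3 := by nlinarith
  -- key numeric bounds from the choice of R
  have hkey1 : 2*(a+b^2)^2 < ε^2 * t := by
    have he : 2*(a+b^2)^2/ε^2 * ε^2 = 2*(a+b^2)^2 := div_mul_cancel₀ _ (by positivity)
    nlinarith [mul_le_mul_of_nonneg_left (show 1 + 2*(a+b^2)^2/ε^2 ≤ t by linarith)
      (le_of_lt (show (0:ℝ) < ε^2 by positivity))]
  have hkey3 : a*b + a*b^2 < ε * t := by
    have he : (a*b+a*b^2)/ε * ε = a*b+a*b^2 := div_mul_cancel₀ _ (ne_of_gt hε)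
    nlinarith [mul_le_mul_of_nonneg_left (show 1 + (a*b+a*b^2)/ε ≤ t by linarith) (le_of_lt hε)]
  have hkey4 : 2*b + 2*a < ε * t := by
    have he : (2*b+2*a)/ε * ε = 2*b+2*a := div_mul_cancel₀ _ (ne_of_gt hε)
    nlinarith [mul_le_mul_of_nonneg_left (show 1 + (2*b+2*a)/ε ≤ t by linarith) (le_of_lt hε)]
  -- lower bound for |γ|²
  have hγpos : 0 < ‖γ‖ := by
    simpa [norm_pos_iff] using hγ
  have hγ2 : t^3/2 ≤ ‖γ‖ ^ 2 := by
    have h1 : ‖γ‖ ^ 2 = ‖w^3 + u‖ := by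
      rw [← norm_pow]; congr 1; linear_combination hu
    have h2 : ‖w^3‖ ≤ ‖w^3 + u‖ + ‖u‖ := by
      have := norm_add_le (w^3 + u) (-u)
      simp only [add_neg_cancel_right, norm_neg] at this
      simpa using this
    have h3 : ‖w^3‖ = t^3 := by rw [norm_pow]
    rw [h1]
    nlinarith
  -- the difference matrix
  subst hu
  have hD := conj_eq w γ z hw hγ
  rw [gGauge_inv w γ z hw hγ, hD]
  have hnum1 : ‖(γ^2 - w^3) + w*z^2‖ ≤ a + t*b^2 := by
    calc ‖(γ^2 - w^3) + w*z^2‖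
        ≤ ‖γ^2 - w^3‖ + ‖w*z^2‖ := norm_add_le _ _
      _ = a + t*b^2 := by rw [norm_mul, norm_pow]
  have hnum2 : ‖w - z‖ ≤ t + b := by
    have := norm_add_le w (-z)
    simp only [norm_neg] at this
    simpa [sub_eq_add_neg] using this
  have hnum3 : ‖w^2*z + (γ^2 - w^3)‖ ≤ t^2*b + a := by
    calc ‖w^2*z + (γ^2 - w^3)‖
        ≤ ‖w^2*z‖ + ‖γ^2 - w^3‖ := norm_add_le _ _
      _ = t^2*b + a := by rw [norm_mul, norm_pow]
  have habs00 : ‖((γ^2 - w^3) + w*z^2)/γ‖ < ε := by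
    have h0 : 0 ≤ ε * ‖γ‖ := by positivity
    rw [norm_div, div_lt_iff₀ hγpos]
    refine lt_of_pow_lt_pow_left₀ 2 h0 ?_
    have hX : 0 ≤ ‖(γ^2 - w^3) + w*z^2‖ := norm_nonneg _
    have hsq : ‖(γ^2 - w^3) + w*z^2‖ ^ 2 ≤ (a + t*b^2)^2 :=
      pow_le_pow_left₀ hX hnum1 2
    have h5a : a + t*b^2 ≤ t*(a+b^2) := by
      nlinarith [mul_nonneg (sub_nonneg.mpr ht1) ha0]
    have h5 : (a + t*b^2)^2 ≤ t^2*(a+b^2)^2 := by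
      have := pow_le_pow_left₀ (by positivity : (0:ℝ) ≤ a + t*b^2) h5a 2
      nlinarith [this]
    have h6 : t^2 * (2*(a+b^2)^2) < t^2 * (ε^2*t) :=
      (mul_lt_mul_iff_right₀ (by positivity)).mpr hkey1
    have h7 : ε^2 * (t^3/2) ≤ ε^2 * (‖γ‖ ^2) :=
      mul_le_mul_of_nonneg_left hγ2 (by positivity)
    have h8 : (ε * ‖γ‖)^2 = ε^2 * ‖γ‖ ^ 2 := by ring
    nlinarith
  fin_cases i <;> fin_cases j <;>
    simp only [Fin.zero_eta, Fin.mk_one, Fin.isValue, Matrix.of_apply, Matrix.cons_val',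
      Matrix.cons_val_zero, Matrix.cons_val_one, Matrix.head_cons, Matrix.empty_val',
      Matrix.cons_val_fin_one, Matrix.head_fin_const]
  · exact habs00
  · -- |(γ²-w³) z (w-z) / w²| < ε
    rw [norm_div, norm_mul, norm_mul, norm_pow, div_lt_iff₀ (by positivity : (0:ℝ) < ‖w‖ ^ 2)]
    have ea : ‖γ^2 - w^3‖ = a := ha.symm
    have eb : ‖z‖ = b := hb.symm
    have et : ‖w‖ = t := htdef.symm
    rw [ea, eb, et]
    have h1 : a * b * ‖w - z‖ ≤ a * b * (t + b) :=
      mul_le_mul_of_nonneg_left hnum2 (by positivity)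
    nlinarith [mul_lt_mul_of_pos_left hkey3 ht0,
      mul_nonneg (mul_nonneg (mul_nonneg ha0 hb0) hb0) (sub_nonneg.mpr ht1)]
  · -- |-(w²z + (γ²-w³))/γ²| < ε
    rw [norm_div, norm_neg, norm_pow,
      div_lt_iff₀ (by positivity : (0:ℝ) < ‖γ‖ ^ 2)]
    have h6 : ε * (t^3/2) ≤ ε * (‖γ‖ ^2) := mul_le_mul_of_nonneg_left hγ2 hε.le
    have haa : a ≤ a * t^2 := by nlinarith
    nlinarith [mul_lt_mul_of_pos_left hkey4 (show (0:ℝ) < t^2 by positivity)]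
  · rw [norm_neg]
    exact habs00
end
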